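/- Let X be a finite subset of ℝ^d and let N be a positive integer. Suppose for each x ∈ X there is a function F_x : X → ℝ such that: F_x(x) = k for a fixed real constant k, F_x(y) ∈ {0,1} for all y ∈ X with y ≠ x, F_x(y) = F_y(x) for all x, y ∈ X, and the matrix M = (F_x(y))_{x,y∈X} has rank at most N. If |X| ≥ 2N, then k is an integer. -/

import Mathlib

open Matrix Polynomial Module Submodule IntermediateField

section Aux

variable {K L : Type*} [Field K] [Field L]

private lemma aux_exists_subfamily_li {V : Type*} [AddCommGroup V] [Module K V]
    {n : Type*} [Fintype n] (v : n → V) {r : ℕ}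
    (h : r = finrank K (span K (Set.range v))) :
    ∃ f : Fin r → n, LinearIndependent K (v ∘ f) := by
  obtain ⟨t, hts, hspan, hli⟩ := exists_linearIndependent K (Set.range v)
  have htfin : t.Finite := (Set.finite_range v).subset hts
  haveI : Fintype t := htfin.fintype
  have hcard : t.toFinset.card = r := by
    rw [h, ← hspan, finrank_span_set_eq_card hli]
  have e : Fin r ≃ t := by
    apply (Fintype.equivFinOfCardEq ?_).symm
    rw [Set.toFinset_card] at hcard
    exact hcard
  choose idx hidx using fun x : t => hts x.2
  refine ⟨fun i => idx (e i), ?_⟩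
  have : v ∘ (fun i => idx (e i)) = (fun x : t => (x : V)) ∘ e := by
    funext i
    simp [Function.comp, hidx (e i)]
  rw [this]
  exact hli.comp e e.injective

private lemma aux_exists_submatrix_det_ne_zero {m n : Type*} [Fintype m] [Fintype n]
    [DecidableEq m] [DecidableEq n] (M : Matrix m n K) :
    ∃ f : Fin M.rank → m, ∃ g : Fin M.rank → n, (M.submatrix f g).det ≠ 0 := by
  obtain ⟨f, hf⟩ := aux_exists_subfamily_li (K := K) (fun i => M i) M.rank_eq_finrank_span_row
  set N : Matrix (Fin M.rank) n K := M.submatrix f id with hN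
  have hrows : LinearIndependent K (fun i => N i) := hf
  have hrankN : N.rank = M.rank := by
    rw [LinearIndependent.rank_matrix (M := N) hrows, Fintype.card_fin]
  obtain ⟨g, hg⟩ := aux_exists_subfamily_li (K := K) (fun j => Nᵀ j)
    (r := M.rank) (by rw [Matrix.rank_eq_finrank_span_cols N] at hrankN; exact hrankN.symm)
  refine ⟨f, g, ?_⟩
  have hS : LinearIndependent K (fun j => (M.submatrix f g)ᵀ j) := hg
  have := Matrix.linearIndependent_rows_iff_isUnit.mp hS
  have hdet : IsUnit (M.submatrix f g)ᵀ.det := (Matrix.isUnit_iff_isUnit_det _).mp this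
  rw [Matrix.det_transpose] at hdet
  exact hdet.ne_zero

private lemma aux_rank_le_of_submatrix_det_ne_zero {m n : Type*} [Fintype m] [Fintype n]
    [DecidableEq m] [DecidableEq n] {r : ℕ} (M : Matrix m n K)
    (f : Fin r → m) (g : Fin r → n) (h : (M.submatrix f g).det ≠ 0) :
    r ≤ M.rank := by
  classical
  set P : Matrix (Fin r) m K := Matrix.of fun i a => if a = f i then 1 else 0 with hP
  set Q : Matrix n (Fin r) K := Matrix.of fun b j => if b = g j then 1 else 0 with hQ
  have key : P * M * Q = M.submatrix f g := by
    ext i j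
    simp only [Matrix.mul_apply, hP, hQ, Matrix.of_apply, Matrix.submatrix_apply]
    simp [ite_mul, Finset.sum_ite_eq', Finset.sum_ite_eq]
  have h1 : (M.submatrix f g).rank = r := by
    rw [Matrix.rank_of_isUnit _ ((Matrix.isUnit_iff_isUnit_det _).mpr h.isUnit), Fintype.card_fin]
  calc r = (M.submatrix f g).rank := h1.symm
    _ = (P * M * Q).rank := by rw [key]
    _ ≤ (P * M).rank := Matrix.rank_mul_le_left _ _
    _ ≤ M.rank := Matrix.rank_mul_le_right _ _

private lemma aux_rank_map_field (φ : K →+* L) {m n : Type*} [Fintype m] [Fintype n]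
    [DecidableEq m] [DecidableEq n] (M : Matrix m n K) :
    (M.map φ).rank = M.rank := by
  apply le_antisymm
  · obtain ⟨f, g, h⟩ := aux_exists_submatrix_det_ne_zero (M.map φ)
    apply aux_rank_le_of_submatrix_det_ne_zero M f g
    intro h0
    apply h
    rw [Matrix.submatrix_map]
    have hd : ((M.submatrix f g).map φ).det = φ ((M.submatrix f g).det) :=
      (RingHom.map_det φ _).symm
    rw [hd, h0, map_zero]
  · obtain ⟨f, g, h⟩ := aux_exists_submatrix_det_ne_zero M
    apply aux_rank_le_of_submatrix_det_ne_zero (M.map φ) f g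
    rw [Matrix.submatrix_map]
    have hd : ((M.submatrix f g).map φ).det = φ ((M.submatrix f g).det) :=
      (RingHom.map_det φ _).symm
    rw [hd]
    simpa using φ.injective.ne h

private lemma aux_eval_charpoly_det {R : Type*} [CommRing R] {ι : Type*} [Fintype ι]
    [DecidableEq ι] (B : Matrix ι ι R) (x : R) :
    (B.charpoly).eval x = (x • (1 : Matrix ι ι R) - B).det := by
  rw [Matrix.charpoly]
  have h : (evalRingHom x) (B.charmatrix.det) = ((B.charmatrix).map (evalRingHom x)).det :=
    RingHom.map_det (evalRingHom x) _
  rw [show (B.charmatrix.det).eval x = (evalRingHom x) (B.charmatrix.det) from rfl, h]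
  congr 1
  ext i j
  by_cases hij : i = j
  · subst hij
    simp [Matrix.charmatrix_apply_eq, Matrix.one_apply]
  · simp [Matrix.charmatrix_apply_ne _ _ _ hij, Matrix.one_apply, hij]

private lemma aux_isIntegral {ι : Type*} [Fintype ι] [DecidableEq ι] (A : Matrix ι ι ℤ) (k : ℝ)
    (hdet : ((A.map (Int.cast : ℤ → ℝ)) + k • 1).det = 0) : IsIntegral ℤ k := by
  refine ⟨(-A).charpoly, (-A).charpoly_monic, ?_⟩
  rw [Polynomial.eval₂_eq_eval_map, ← Matrix.charpoly_map (-A) (algebraMap ℤ ℝ)]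
  have hmap : (-A).map (algebraMap ℤ ℝ) = -(A.map (Int.cast : ℤ → ℝ)) := by
    ext i j; simp
  rw [hmap, aux_eval_charpoly_det, sub_neg_eq_add, add_comm]
  exact hdet

private lemma aux_exists_conj (k : ℝ) (hk : IsIntegral ℚ k)
    (hdeg : 2 ≤ (minpoly ℚ k).natDegree) :
    ∃ (k' : ℂ) (σ : ℚ⟮k⟯ →ₐ[ℚ] ℂ), k' ≠ (k : ℂ) ∧
      σ (AdjoinSimple.gen ℚ k) = k' := by
  set q := minpoly ℚ k with hq
  set qc := q.map (algebraMap ℚ ℂ) with hqc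
  have hq0 : q ≠ 0 := minpoly.ne_zero hk
  have hqc0 : qc ≠ 0 := Polynomial.map_ne_zero hq0
  have haev : Polynomial.aeval ((k : ℂ)) q = 0 := by
    have h1 : Polynomial.aeval ((algebraMap ℝ ℂ) k) q = algebraMap ℝ ℂ (Polynomial.aeval k q) :=
      Polynomial.aeval_algebraMap_apply ℂ k q
    have h2 : Polynomial.aeval k q = 0 := minpoly.aeval ℚ k
    rw [h2, map_zero] at h1
    exact h1
  have hkroot : (k : ℂ) ∈ qc.roots := by
    rw [Polynomial.mem_roots hqc0]
    show Polynomial.eval _ qc = 0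
    rw [hqc, Polynomial.eval_map_algebraMap]
    exact haev
  have hsep : q.Separable := (minpoly.irreducible hk).separable
  have hnodup : qc.roots.Nodup := Polynomial.nodup_roots hsep.map
  have hcard : qc.roots.card = q.natDegree := by
    rw [← Polynomial.natDegree_map (algebraMap ℚ ℂ)]
    exact (Polynomial.Splits.natDegree_eq_card_roots (IsAlgClosed.splits _)).symm
  have hex : ∃ k' ∈ qc.roots, k' ≠ (k : ℂ) := by
    by_contra hcon
    push_neg at hcon
    have hrep : qc.roots = Multiset.replicate qc.roots.card (k : ℂ) :=
      Multiset.eq_replicate_card.mpr hcon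
    have h2 : qc.roots.count (k : ℂ) ≤ 1 := Multiset.nodup_iff_count_le_one.mp hnodup (k : ℂ)
    rw [hrep, Multiset.count_replicate] at h2
    simp at h2
    omega
  obtain ⟨k', hk'root, hk'ne⟩ := hex
  have hroot' : Polynomial.aeval k' q = 0 := by
    have h3 := (Polynomial.mem_roots hqc0).mp hk'root
    rw [Polynomial.aeval_def, Polynomial.eval₂_eq_eval_map]
    exact h3
  have hy : Polynomial.aeval k' (minpoly ℚ (IntermediateField.adjoin.powerBasis hk).gen) = 0 := by
    rw [IntermediateField.adjoin.powerBasis_gen]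
    convert hroot' using 2
    exact IntermediateField.minpoly_gen ℚ k
  refine ⟨k', (IntermediateField.adjoin.powerBasis hk).lift k' hy, hk'ne, ?_⟩
  exact PowerBasis.lift_gen (IntermediateField.adjoin.powerBasis hk) (y := k') hy

private lemma aux_mul_eq_zero_of_ranks {ι : Type*} [Fintype ι] [DecidableEq ι]
    (E E' : Matrix ι ι ℂ) (N : ℕ)
    (hE : E.rank ≤ N) (hE' : E'.rank ≤ N) (hcomm : E * E' = E' * E)
    {c : ℂ} (hc : c ≠ 0) (hdiff : E - E' = c • 1) (hcard : 2 * N ≤ Fintype.card ι) :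
    E * E' = 0 := by
  set n := Fintype.card ι with hn
  set f := E.mulVecLin with hf
  set f' := E'.mulVecLin with hf'
  have hker : ∀ (B : Matrix ι ι ℂ), finrank ℂ (LinearMap.range B.mulVecLin) +
      finrank ℂ (LinearMap.ker B.mulVecLin) = n := by
    intro B
    rw [LinearMap.finrank_range_add_finrank_ker B.mulVecLin]
    simp [hn]
  have hinf : LinearMap.ker f ⊓ LinearMap.ker f' = ⊥ := by
    rw [eq_bot_iff]
    rintro v ⟨hv1, hv2⟩
    simp only [SetLike.mem_coe, LinearMap.mem_ker, hf, hf', Matrix.mulVecLin_apply] at hv1 hv2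
    have h0 : (E - E') *ᵥ v = 0 := by rw [Matrix.sub_mulVec, hv1, hv2, sub_zero]
    rw [hdiff, Matrix.smul_mulVec, Matrix.one_mulVec] at h0
    have := smul_eq_zero.mp h0
    simp only [Submodule.mem_bot]
    tauto
  have hsup : LinearMap.ker f ⊔ LinearMap.ker f' = ⊤ := by
    have h1 := Submodule.finrank_sup_add_finrank_inf_eq (LinearMap.ker f) (LinearMap.ker f')
    rw [hinf] at h1
    simp only [finrank_bot, add_zero] at h1
    have hle : n ≤ finrank ℂ ↥(LinearMap.ker f ⊔ LinearMap.ker f') := by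
      have hr : E.rank + finrank ℂ (LinearMap.ker f) = n := hker E
      have hr' : E'.rank + finrank ℂ (LinearMap.ker f') = n := hker E'
      omega
    apply Submodule.eq_top_of_finrank_eq
    have hle2 : finrank ℂ ↥(LinearMap.ker f ⊔ LinearMap.ker f') ≤ finrank ℂ (ι → ℂ) :=
      Submodule.finrank_le _
    simp only [finrank_pi, ← hn] at hle2 ⊢
    omega
  have hvec : ∀ v : ι → ℂ, (E * E') *ᵥ v = 0 := by
    intro v
    have hv : v ∈ LinearMap.ker f ⊔ LinearMap.ker f' := by rw [hsup]; trivial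
    obtain ⟨a, ha, b, hb, rfl⟩ := Submodule.mem_sup.mp hv
    simp only [LinearMap.mem_ker, hf, hf', Matrix.mulVecLin_apply] at ha hb
    rw [Matrix.mulVec_add]
    have h1 : (E * E') *ᵥ a = 0 := by
      rw [hcomm, ← Matrix.mulVec_mulVec, ha, Matrix.mulVec_zero]
    have h2 : (E * E') *ᵥ b = 0 := by
      rw [← Matrix.mulVec_mulVec, hb, Matrix.mulVec_zero]
    rw [h1, h2, add_zero]
  ext i j
  have := congrFun (hvec (Pi.single j 1)) i
  simpa using this

end Aux

set_option maxHeartbeats 1000000 in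
set_option synthInstance.maxHeartbeats 100000 in
private lemma aux_main {ι : Type*} [Fintype ι] [DecidableEq ι] (N : ℕ) (hN : 0 < N) (k : ℝ)
    (F : ι → ι → ℝ)
    (hdiag : ∀ x, F x x = k)
    (hoff : ∀ x y, x ≠ y → F x y = 0 ∨ F x y = 1)
    (hsym : ∀ x y, F x y = F y x)
    (hrank : (Matrix.of F).rank ≤ N)
    (hcard : 2 * N ≤ Fintype.card ι) :
    ∃ z : ℤ, k = (z : ℝ) := by
  classical
  set n := Fintype.card ι with hndef
  have hn2 : 2 * N ≤ n := hcard
  -- the integer adjacency matrix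
  set A : Matrix ι ι ℤ := Matrix.of (fun x y => if x = y then 0 else if F x y = 1 then 1 else 0)
    with hA
  have hAdiag : ∀ x, A x x = 0 := by intro x; simp [hA]
  have hA01 : ∀ x y, A x y = 0 ∨ A x y = 1 := by
    intro x y
    by_cases h : x = y
    · subst h; left; exact hAdiag x
    · by_cases h1 : F x y = 1
      · right; simp [hA, h, h1]
      · left; simp [hA, h, h1]
  have hAF : ∀ x y, x ≠ y → ((A x y : ℝ)) = F x y := by
    intro x y h
    rcases hoff x y h with h0 | h1
    · have : F x y ≠ 1 := by rw [h0]; norm_num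
      simp [hA, h, this, h0]
    · simp [hA, h, h1]
  have hAsym : ∀ x y, A x y = A y x := by
    intro x y
    by_cases h : x = y
    · rw [h]
    · simp only [hA, Matrix.of_apply, if_neg h, if_neg (Ne.symm h)]
      rw [hsym x y]
  set Mr : Matrix ι ι ℝ := Matrix.of F with hMr
  have hMeq : Mr = A.map (Int.cast : ℤ → ℝ) + k • 1 := by
    ext x y
    by_cases h : x = y
    · subst h
      simp [hMr, hA, Matrix.one_apply, hdiag x]
    · simp only [hMr, Matrix.add_apply, Matrix.map_apply, Matrix.smul_apply,
        Matrix.one_apply, if_neg h, smul_zero, add_zero, Matrix.of_apply]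
      rw [hAF x y h]
  -- determinant is zero
  have hdet : Mr.det = 0 := by
    by_contra h0
    have hu : IsUnit Mr := (Matrix.isUnit_iff_isUnit_det Mr).mpr (Ne.isUnit h0)
    have := Matrix.rank_of_isUnit Mr hu
    rw [this] at hrank
    omega
  -- k is integral over ℤ
  have hint : IsIntegral ℤ k := by
    apply aux_isIntegral A k
    rw [← hMeq]
    exact hdet
  have hintQ : IsIntegral ℚ k := hint.tower_top
  by_cases hdeg : (minpoly ℚ k).natDegree ≤ 1
  · -- rational case
    have hdeg1 : (minpoly ℚ k).natDegree = 1 := by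
      have := minpoly.natDegree_pos hintQ
      omega
    have hmem : k ∈ (algebraMap ℚ ℝ).range := by
      rw [← minpoly.natDegree_eq_one_iff]
      exact hdeg1
    obtain ⟨r, hr⟩ := hmem
    have hintr : IsIntegral ℤ r := by
      have : IsIntegral ℤ (algebraMap ℚ ℝ r) := by rw [hr]; exact hint
      exact (isIntegral_algebraMap_iff (algebraMap ℚ ℝ).injective).mp this
    obtain ⟨z, hz⟩ := IsIntegrallyClosed.isIntegral_iff.mp hintr
    refine ⟨z, ?_⟩
    rw [← hr, ← hz]
    push_cast
    rfl
  · -- irrational case: derive k = 1 or k = -d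
    push_neg at hdeg
    obtain ⟨k', σ, hk'ne, hσgen⟩ := aux_exists_conj k hintQ hdeg
    set B : Matrix ι ι ℚ⟮k⟯ := A.map (Int.cast : ℤ → ℚ⟮k⟯) +
      (AdjoinSimple.gen ℚ k) • (1 : Matrix ι ι ℚ⟮k⟯) with hB
    have hBR : B.map (algebraMap ℚ⟮k⟯ ℝ) = Mr := by
      rw [hMeq]
      ext x y
      have hgen : algebraMap ℚ⟮k⟯ ℝ (AdjoinSimple.gen ℚ k) = k :=
        IntermediateField.AdjoinSimple.algebraMap_gen ℚ k
      by_cases h : x = y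
      · subst h
        simp [hB, Matrix.one_apply, hgen]
      · simp [hB, Matrix.one_apply, h, hgen]
    set Ac : Matrix ι ι ℂ := A.map (Int.cast : ℤ → ℂ) with hAc
    set E : Matrix ι ι ℂ := Ac + (k : ℂ) • 1 with hE
    set E' : Matrix ι ι ℂ := Ac + k' • 1 with hE'
    have hBC : B.map σ = E' := by
      ext x y
      by_cases h : x = y
      · subst h
        simp [hB, hE', hAc, Matrix.one_apply, hσgen]
      · simp [hB, hE', hAc, Matrix.one_apply, h, hσgen]
    have hEC : Mr.map (algebraMap ℝ ℂ) = E := by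
      rw [hMeq]
      ext x y
      by_cases h : x = y
      · subst h
        simp [hE, hAc, Matrix.one_apply]
      · simp [hE, hAc, Matrix.one_apply, h]
    -- rank bounds
    have hrankB : B.rank ≤ N := by
      have := aux_rank_map_field (algebraMap ℚ⟮k⟯ ℝ) B
      rw [hBR] at this
      rw [← this]
      exact hrank
    have hrankE : E.rank ≤ N := by
      have := aux_rank_map_field (algebraMap ℝ ℂ) Mr
      rw [hEC] at this
      rw [this]
      exact hrank
    have hrankE' : E'.rank ≤ N := by
      have := aux_rank_map_field (σ : ℚ⟮k⟯ →+* ℂ) B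
      rw [show B.map (σ : ℚ⟮k⟯ →+* ℂ) = B.map σ from rfl, hBC] at this
      rw [this]
      exact hrankB
    -- commutation
    have hcomm : ∀ a b : ℂ, (Ac + a • 1) * (Ac + b • 1) =
        Ac * Ac + (a + b) • Ac + (a * b) • 1 := by
      intro a b
      simp only [Matrix.add_mul, Matrix.mul_add, Matrix.mul_smul, Matrix.smul_mul,
        Matrix.mul_one, Matrix.one_mul, add_smul]
      rw [smul_add, smul_smul, mul_comm b a]
      abel
    have hEcomm : E * E' = E' * E := by
      rw [hE, hE', hcomm, hcomm]
      ring_nf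
    have hdiff : E - E' = ((k : ℂ) - k') • 1 := by
      rw [hE, hE', sub_smul]
      abel
    have hcne : ((k : ℂ) - k') ≠ 0 := sub_ne_zero.mpr (Ne.symm hk'ne)
    have hEE' : E * E' = 0 :=
      aux_mul_eq_zero_of_ranks E E' N hrankE hrankE' hEcomm hcne hdiff (by rw [← hndef]; exact hn2)
    -- entrywise relations
    have hexp : Ac * Ac + ((k : ℂ) + k') • Ac + ((k : ℂ) * k') • 1 = 0 := by
      rw [← hcomm, ← hE, ← hE']
      exact hEE'
    have hAcsq : ∀ x y, (Ac * Ac) x y = (((A * A) x y : ℤ) : ℂ) := by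
      intro x y
      have h := Matrix.map_mul (L := A) (M := A) (f := Int.castRingHom ℂ)
      have h2 : (Ac * Ac) x y = ((A * A).map (Int.cast : ℤ → ℂ)) x y := by
        rw [hAc]
        exact (congrFun (congrFun h x) y).symm
      rw [h2]
      rfl
    have hdiagc : ∀ x : ι, (((A * A) x x : ℤ) : ℂ) + (k : ℂ) * k' = 0 := by
      intro x
      have := congrFun (congrFun hexp x) x
      simp only [Matrix.add_apply, Matrix.smul_apply, Matrix.one_apply_eq, smul_eq_mul,
        mul_one, Matrix.zero_apply] at this
      rw [hAcsq x x] at this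
      have hz : Ac x x = 0 := by simp [hAc, hAdiag x]
      rw [hz, mul_zero, add_zero] at this
      exact this
    have hoffc : ∀ x y : ι, x ≠ y →
        (((A * A) x y : ℤ) : ℂ) + ((k : ℂ) + k') * ((A x y : ℤ) : ℂ) = 0 := by
      intro x y hxy
      have := congrFun (congrFun hexp x) y
      simp only [Matrix.add_apply, Matrix.smul_apply, Matrix.one_apply, if_neg hxy,
        smul_eq_mul, mul_zero, add_zero, Matrix.zero_apply] at this
      rw [hAcsq x y] at this
      have hac : Ac x y = ((A x y : ℤ) : ℂ) := by simp [hAc]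
      rw [hac] at this
      exact this
    -- all diagonal entries of A*A are equal
    have hdiageq : ∀ x y : ι, (A * A) x x = (A * A) y y := by
      intro x y
      have h1 := hdiagc x
      have h2 := hdiagc y
      have : (((A * A) x x : ℤ) : ℂ) = (((A * A) y y : ℤ) : ℂ) := by linear_combination h1 - h2
      exact_mod_cast this
    -- entries of A*A are sums of products of 0/1 entries
    have hAAapp : ∀ x y, (A * A) x y = ∑ w, A x w * A w y := by
      intro x y
      rfl
    -- transitivity of adjacency
    have htrans : ∀ x y z : ι, A x y = 1 → A y z = 1 → x ≠ z → A x z = 1 := by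
      intro x y z hxy hyz hxz
      rcases hA01 x z with h0 | h1
      · exfalso
        have hge : 1 ≤ (A * A) x z := by
          rw [hAAapp]
          calc (1 : ℤ) = A x y * A y z := by rw [hxy, hyz]; ring
            _ ≤ ∑ w, A x w * A w z := by
                apply Finset.single_le_sum (f := fun w => A x w * A w z)
                · intro w _
                  rcases hA01 x w with h | h <;> rcases hA01 w z with h' | h' <;>
                    simp [h, h']
                · exact Finset.mem_univ y
        have := hoffc x z hxz
        rw [h0] at this
        push_cast at this
        rw [mul_zero, add_zero] at this
        have : (A * A) x z = 0 := by exact_mod_cast this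
        omega
      · exact h1
    -- pick a base point, define the degree
    have hpos : 0 < n := by omega
    have : Nonempty ι := by
      rw [← Fintype.card_pos_iff, ← hndef]
      exact hpos
    obtain ⟨x₀⟩ := this
    set dd : ℤ := (A * A) x₀ x₀ with hdd
    have hdiagd : ∀ x, (A * A) x x = dd := fun x => hdiageq x x₀
    -- degree formula : (A*A) x x = ∑ w, A x w
    have hdegform : ∀ x, (A * A) x x = ∑ w, A x w := by
      intro x
      rw [hAAapp]
      apply Finset.sum_congr rfl
      intro w _
      rw [← hAsym x w]
      rcases hA01 x w with h | h <;> simp [h]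
    -- the key quadratic identity for A over ℤ
    have hquad : A * A + (1 - dd) • A - dd • (1 : Matrix ι ι ℤ) = 0 := by
      ext x z
      simp only [Matrix.sub_apply, Matrix.add_apply, Matrix.smul_apply, Matrix.one_apply,
        smul_eq_mul, Matrix.zero_apply]
      by_cases hxz : x = z
      · subst hxz
        rw [hdiagd x, hAdiag x]
        ring_nf
        simp
      · simp only [if_neg hxz, mul_zero, sub_zero]
        rcases hA01 x z with h0 | h1
        · rw [h0, mul_zero, add_zero]
          rw [hAAapp]
          apply Finset.sum_eq_zero
          intro w _
          rcases hA01 x w with h | h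
          · rw [h, zero_mul]
          · rcases hA01 w z with h' | h'
            · rw [h', mul_zero]
            · exfalso
              have := htrans x w z h h' hxz
              omega
        · rw [h1, mul_one]
          have hsum : (A * A) x z = (∑ w, A x w) - 1 := by
            rw [hAAapp]
            have hterm : ∀ w : ι, A x w * A w z = A x w - (if w = z then 1 else 0) := by
              intro w
              by_cases hwz : w = z
              · subst hwz
                rw [hAdiag w, mul_zero, h1]
                simp
              · simp only [if_neg hwz, sub_zero]
                rcases hA01 x w with h | h
                · rw [h, zero_mul]
                · have hwx : w ≠ x := by
                    intro hh
                    rw [hh, hAdiag x] at h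
                    omega
                  have : A w z = 1 := by
                    apply htrans w x z _ h1 hwz
                    rw [hAsym w x]
                    exact h
                  rw [h, this, mul_one]
            rw [Finset.sum_congr rfl (fun w _ => hterm w), Finset.sum_sub_distrib]
            simp
          rw [hsum, ← hdegform x, hdiagd x]
          ring
    -- transfer to ℝ
    set Ar : Matrix ι ι ℝ := A.map (Int.cast : ℤ → ℝ) with hAr
    have hcastAr : ∀ x y, (Ar * Ar) x y = (((A * A) x y : ℤ) : ℝ) := by
      intro x y
      have h := Matrix.map_mul (L := A) (M := A) (f := Int.castRingHom ℝ)
      have h2 : (Ar * Ar) x y = ((A * A).map (Int.cast : ℤ → ℝ)) x y := by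
        rw [hAr]
        exact (congrFun (congrFun h x) y).symm
      rw [h2]
      rfl
    have hquadR : Ar * Ar + ((1 : ℝ) - (dd : ℝ)) • Ar - (dd : ℝ) • (1 : Matrix ι ι ℝ) = 0 := by
      ext x y
      have h2 := congrFun (congrFun hquad x) y
      simp only [Matrix.sub_apply, Matrix.add_apply, Matrix.smul_apply, Matrix.one_apply,
        smul_eq_mul, Matrix.zero_apply] at h2 ⊢
      rw [hcastAr x y]
      have har : Ar x y = ((A x y : ℤ) : ℝ) := by simp [hAr]
      rw [har]
      by_cases hxy : x = y
      · rw [if_pos hxy]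
        rw [if_pos hxy] at h2
        exact_mod_cast h2
      · rw [if_neg hxy]
        rw [if_neg hxy] at h2
        exact_mod_cast h2
    -- eigenvector for Mr
    have hker : ∃ v : ι → ℝ, v ≠ 0 ∧ Mr *ᵥ v = 0 := by
      have := (Matrix.exists_mulVec_eq_zero_iff (A := ℝ)).mpr hdet
      obtain ⟨v, hv0, hv⟩ := this
      exact ⟨v, hv0, hv⟩
    obtain ⟨v, hv0, hv⟩ := hker
    have hAv : Ar *ᵥ v = (-k) • v := by
      have h1 : (Ar + k • 1) *ᵥ v = 0 := by
        rw [hAr, ← hMeq]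
        exact hv
      rw [Matrix.add_mulVec, Matrix.smul_mulVec, Matrix.one_mulVec] at h1
      have := eq_neg_of_add_eq_zero_left h1
      rw [this]
      ext i
      simp
    -- apply the quadratic identity to v
    have happ := congrArg (fun (G : Matrix ι ι ℝ) => G *ᵥ v) hquadR
    simp only [Matrix.sub_mulVec, Matrix.add_mulVec, Matrix.zero_mulVec,
      Matrix.smul_mulVec, Matrix.one_mulVec] at happ
    have hAAv : (Ar * Ar) *ᵥ v = (k * k) • v := by
      rw [← Matrix.mulVec_mulVec, hAv]
      have hsm : Ar *ᵥ ((-k) • v) = (-k) • (Ar *ᵥ v) := by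
        ext i
        exact congrFun (Ar.mulVecLin.map_smul (-k) v) i
      rw [hsm, hAv, _root_.smul_smul]
      congr 1
      ring
    rw [hAAv, hAv] at happ
    have hfinal : ((k * k) + (1 - (dd : ℝ)) * (-k) - (dd : ℝ)) • v = 0 := by
      rw [sub_smul, add_smul, mul_smul (1 - (dd : ℝ)) (-k) v]
      exact happ
    have hscal : (k * k) + (1 - (dd : ℝ)) * (-k) - (dd : ℝ) = 0 := by
      rcases smul_eq_zero.mp hfinal with h | h
      · exact h
      · exact absurd h hv0
    have hfact : (k - 1) * (k + (dd : ℝ)) = 0 := by linear_combination hscal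
    rcases mul_eq_zero.mp hfact with h | h
    · exact ⟨1, by push_cast; linarith⟩
    · exact ⟨-dd, by push_cast; linarith⟩

theorem key_lemma_integrality
    (d N : ℕ) (hN : 0 < N)
    (X : Finset (EuclideanSpace ℝ (Fin d)))
    (k : ℝ)
    (F : {x // x ∈ X} → {x // x ∈ X} → ℝ)
    (hdiag : ∀ x, F x x = k)
    (hoff : ∀ x y, x ≠ y → F x y = 0 ∨ F x y = 1)
    (hsym : ∀ x y, F x y = F y x)
    (hrank : (Matrix.of F).rank ≤ N)
    (hcard : 2 * N ≤ X.card) :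
    ∃ z : ℤ, k = (z : ℝ) := by
  classical
  exact aux_main N hN k F hdiag hoff hsym hrank (by rw [Fintype.card_coe]; exact hcard)
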